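/- For null geodesics in the Kerr spacetime, the conserved quantity q = k − 2aeℓ − ℓ², where k = K_{ab}γ̇^aγ̇^b is the Carter constant, e the energy and ℓ the azimuthal angular momentum, equals (γ̇_θ)² + cot²θ (γ̇_φ)² + a²sin²θ (γ̇_t)², and is therefore nonnegative. -/

import Mathlib

noncomputable section

open Matrix

/-- The Kerr horizon function `Δ = r² − 2Mr + a²`. -/
def Dk (M a r : ℝ) : ℝ := r^2 - 2*M*r + a^2

/-- `Σ = r² + a²cos²θ`. -/
def Sk (a r θ : ℝ) : ℝ := r^2 + a^2 * Real.cos θ ^ 2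

/-- The tensor `R^{αβ} = −(r²+a²)²∂_t∂_t − 4aMr ∂_t∂_φ (symmetrized) + (Δ−a²)∂_φ∂_φ
+ ΔQ^{αβ}` with `Q^{αβ} = ∂_θ∂_θ + cot²θ ∂_φ∂_φ + a²sin²θ ∂_t∂_t`, in Boyer–Lindquist
coordinates `(t,r,θ,φ)`. -/
def Rmat (M a r θ : ℝ) : Matrix (Fin 4) (Fin 4) ℝ :=
  !![-(r^2 + a^2)^2 + Dk M a r * a^2 * Real.sin θ ^ 2, 0, 0, -2*a*M*r;
     0, 0, 0, 0;
     0, 0, Dk M a r, 0;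
     -2*a*M*r, 0, 0, (Dk M a r - a^2) + Dk M a r * (Real.cos θ / Real.sin θ)^2]

/-- The inverse Kerr metric, via the identity `Σ g^{αβ} = −Δ ∂_r∂_r − R^{αβ}/Δ`. -/
def ginvK (M a r θ : ℝ) : Matrix (Fin 4) (Fin 4) ℝ :=
  (Sk a r θ)⁻¹ • ((-(Dk M a r)) • Matrix.single 1 1 (1 : ℝ)
    - (Dk M a r)⁻¹ • Rmat M a r θ)

set_option maxHeartbeats 1000000 in
/-- For a null geodesic in Kerr with covelocity `p = γ̇_a` (so `e = p_t`, `ℓ_z = p_φ`),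
Carter's constant is `k = K_{ab}γ̇^aγ̇^b = 2Σ(l^aγ̇_a)(n^bγ̇_b) − r²g(γ̇,γ̇)` with the
Carter tetrad `l, n`.  The quantity `q = k − 2aeℓ_z − ℓ_z²` equals
`γ̇_θ² + cot²θ γ̇_φ² + a²sin²θ γ̇_t²`, and is therefore nonnegative. -/
theorem carter_q_sum_of_squares (M a r θ : ℝ) (p : Fin 4 → ℝ)
    (hD : 0 < Dk M a r) (hS : 0 < Sk a r θ) (hs : Real.sin θ ≠ 0)
    (hnull : ∑ i, ∑ j, ginvK M a r θ i j * p i * p j = 0) :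
    ((2 * Sk a r θ *
        (((a^2 + r^2) * p 0 + Dk M a r * p 1 + a * p 3)
          / (Real.sqrt 2 * Real.sqrt (Dk M a r) * Real.sqrt (Sk a r θ))) *
        (((a^2 + r^2) * p 0 - Dk M a r * p 1 + a * p 3)
          / (Real.sqrt 2 * Real.sqrt (Dk M a r) * Real.sqrt (Sk a r θ)))
      - r^2 * (∑ i, ∑ j, ginvK M a r θ i j * p i * p j))
      - 2 * a * p 0 * p 3 - (p 3)^2
    = (p 2)^2 + (Real.cos θ / Real.sin θ)^2 * (p 3)^2
        + a^2 * Real.sin θ ^ 2 * (p 0)^2) ∧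
    (0 ≤ (p 2)^2 + (Real.cos θ / Real.sin θ)^2 * (p 3)^2
        + a^2 * Real.sin θ ^ 2 * (p 0)^2) := by
  set D := Dk M a r with hDdef
  set S := Sk a r θ with hSdef
  have hD0 : D ≠ 0 := ne_of_gt hD
  have hS0 : S ≠ 0 := ne_of_gt hS
  have hsum : ∑ i, ∑ j, ginvK M a r θ i j * p i * p j
      = S⁻¹ * (-(D) * p 1 ^ 2 - D⁻¹ *
        ((-(r^2 + a^2)^2 + D * a^2 * Real.sin θ ^ 2) * p 0 ^ 2
          - 4*a*M*r * p 0 * p 3 + D * p 2 ^ 2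
          + ((D - a^2) + D * (Real.cos θ / Real.sin θ)^2) * p 3 ^ 2)) := by
    simp only [Fin.sum_univ_four, ginvK, Rmat, Matrix.smul_apply, Matrix.sub_apply,
      Matrix.single, Matrix.of_apply, Matrix.cons_val', Matrix.cons_val_zero,
      Matrix.cons_val_one, Matrix.head_cons, Matrix.empty_val', Matrix.cons_val_fin_one,
      Matrix.head_fin_const, Matrix.cons_val_two, Matrix.tail_cons,
      Matrix.cons_val_three, smul_eq_mul]
    norm_num [Matrix.vecHead, Matrix.vecTail]
    simp only [show ((1:Fin 4) = 3) = False from by simp,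
      show ((1:Fin 4) = 2) = False from by simp, false_and, and_false, if_false]
    ring
  have hSX : S⁻¹ * (-(D) * p 1 ^ 2 - D⁻¹ *
        ((-(r^2 + a^2)^2 + D * a^2 * Real.sin θ ^ 2) * p 0 ^ 2
          - 4*a*M*r * p 0 * p 3 + D * p 2 ^ 2
          + ((D - a^2) + D * (Real.cos θ / Real.sin θ)^2) * p 3 ^ 2)) = 0 :=
    hsum.symm.trans hnull
  have hX : -(D) * p 1 ^ 2 - D⁻¹ *
        ((-(r^2 + a^2)^2 + D * a^2 * Real.sin θ ^ 2) * p 0 ^ 2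
          - 4*a*M*r * p 0 * p 3 + D * p 2 ^ 2
          + ((D - a^2) + D * (Real.cos θ / Real.sin θ)^2) * p 3 ^ 2) = 0 := by
    rcases mul_eq_zero.mp hSX with h | h
    · exact absurd h (inv_ne_zero hS0)
    · exact h
  have hR : D^2 * p 1 ^ 2 * Real.sin θ ^ 2 =
      -(((-(r^2 + a^2)^2 + D * a^2 * Real.sin θ ^ 2) * p 0 ^ 2
          - 4*a*M*r * p 0 * p 3 + D * p 2 ^ 2 + (D - a^2) * p 3 ^ 2) * Real.sin θ ^ 2
        + D * Real.cos θ ^ 2 * p 3 ^ 2) := by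
    have h := hX
    field_simp at h
    linarith [h]
  refine ⟨?_, by positivity⟩
  have hc2 : (Real.sqrt 2 * Real.sqrt D * Real.sqrt S)
      * (Real.sqrt 2 * Real.sqrt D * Real.sqrt S) = 2 * D * S := by
    rw [show ∀ x y z : ℝ, x*y*z*(x*y*z) = (x*x)*(y*y)*(z*z) by intros; ring]
    rw [Real.mul_self_sqrt (by norm_num), Real.mul_self_sqrt hD.le,
      Real.mul_self_sqrt hS.le]
  have hc0 : Real.sqrt 2 * Real.sqrt D * Real.sqrt S ≠ 0 := by
    intro h
    rw [h, mul_zero] at hc2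
    nlinarith
  rw [hnull]
  set c := Real.sqrt 2 * Real.sqrt D * Real.sqrt S with hcdef
  have hcc : c * c ≠ 0 := mul_ne_zero hc0 hc0
  have e1 : 2 * S *
        (((a^2 + r^2) * p 0 + D * p 1 + a * p 3) / c) *
        (((a^2 + r^2) * p 0 - D * p 1 + a * p 3) / c)
      = 2 * S * (((a^2 + r^2) * p 0 + D * p 1 + a * p 3)
          * ((a^2 + r^2) * p 0 - D * p 1 + a * p 3)) / (c * c) := by
    field_simp
  have hprod : 2 * S *
        (((a^2 + r^2) * p 0 + D * p 1 + a * p 3) / c) *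
        (((a^2 + r^2) * p 0 - D * p 1 + a * p 3) / c)
      = (((a^2 + r^2) * p 0 + a * p 3)^2 - D^2 * p 1 ^ 2) / D := by
    rw [e1, hc2, div_eq_div_iff (by positivity) hD0]
    ring
  rw [hprod]
  have hsin2 : Real.sin θ ^ 2 ≠ 0 := pow_ne_zero 2 hs
  field_simp
  simp only [hDdef, Dk] at hR ⊢
  linear_combination (-1 : ℝ) * hR
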